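/- arXiv:2401.14134 — 6 statements merged into one kernel-verified Lean document; each statement's English description precedes it below -/
import Mathlib

section
/- The 3×3 symmetric matrix M (Hessian of the mixture internal energy at pressure equilibrium, as above) is positive semidefinite: for all x ∈ ℝ³, xᵀ M x ≥ 0. -/
open Matrix

/-- The Hessian of the mixture internal energy at pressure equilibrium is
positive semidefinite. -/
theorem stmt_2 (α c v v₁ v₂ a₁ a₂ a : ℝ)
    (hα : 0 < α) (hα1 : α < 1) (hc : 0 < c) (hc1 : c < 1)
    (hv : 0 < v) (ha₁ : 0 < a₁) (ha₂ : 0 < a₂)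
    (hv₁ : v₁ = α * v / c) (hv₂ : v₂ = (1 - α) * v / (1 - c))
    (ha : a ^ 2 = c * a₁ ^ 2 + (1 - c) * a₂ ^ 2)
    (M : Matrix (Fin 3) (Fin 3) ℝ)
    (hM : M = !![v * (a₁ ^ 2 / (α * v₁) + a₂ ^ 2 / ((1 - α) * v₂)),
                 -(a₁ ^ 2 / α + a₂ ^ 2 / (1 - α)),
                 a₁ ^ 2 / v₁ - a₂ ^ 2 / v₂;
                 -(a₁ ^ 2 / α + a₂ ^ 2 / (1 - α)),
                 a₁ ^ 2 / c + a₂ ^ 2 / (1 - c),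
                 -(a₁ ^ 2 - a₂ ^ 2) / v;
                 a₁ ^ 2 / v₁ - a₂ ^ 2 / v₂,
                 -(a₁ ^ 2 - a₂ ^ 2) / v,
                 a ^ 2 / v ^ 2]) :
    ∀ x : Fin 3 → ℝ, 0 ≤ x ⬝ᵥ M.mulVec x := by
  intro x
  have hα' : (0:ℝ) < 1 - α := by linarith
  have hc' : (0:ℝ) < 1 - c := by linarith
  have key : x ⬝ᵥ M.mulVec x =
      (a₁ ^ 2 / c) * (c * x 0 / α - x 1 + c * x 2 / v) ^ 2 +
      (a₂ ^ 2 / (1 - c)) * ((1 - c) * x 0 / (1 - α) - x 1 - (1 - c) * x 2 / v) ^ 2 := by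
    subst hv₁ hv₂ hM
    simp [Matrix.mulVec, dotProduct, Fin.sum_univ_three, ha]
    field_simp
    ring
  rw [key]
  positivity
end

section
/- Let A be the 5×5 equilibrium Jacobian of the barotropic SHTC two-fluid system (entries given in terms of u, α₁, α₂ = 1−α₁, c₁, c₂ = 1−c₁, ρ, ρ₁, ρ₂, a₁, a₂ with the consistency relations α₁ρ₁ = c₁ρ, α₂ρ₂ = c₂ρ and ∂ρ₂/∂w₃ = (α₂ − α₁c₂)/α₂²). Then the vector R₁₊ = (α₁, 1, 1, u + a₁, a₁/(α₁ρ₁))ᵀ satisfies A·R₁₊ = (u + a₁)·R₁₊. -/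
open Matrix

/-- `R₁₊ = (α₁, 1, 1, u + a₁, a₁/(α₁ρ₁))ᵀ` is an eigenvector of the equilibrium
Jacobian `A` with eigenvalue `u + a₁`. -/
theorem stmt_6 (u a₁ a₂ α₁ c₁ ρ ρ₁ ρ₂ : ℝ)
    (ha₁ : 0 < a₁) (ha₂ : 0 < a₂) (hα₁ : 0 < α₁) (hα₁1 : α₁ < 1)
    (hc₁ : 0 < c₁) (hc₁1 : c₁ < 1) (hρ : 0 < ρ) (hρ₁ : 0 < ρ₁) (hρ₂ : 0 < ρ₂)
    (h1 : α₁ * ρ₁ = c₁ * ρ) (h2 : (1 - α₁) * ρ₂ = (1 - c₁) * ρ)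
    (D : ℝ) (hDdef : D = ((1 - α₁) - α₁ * (1 - c₁)) / (1 - α₁) ^ 2)
    (A : Matrix (Fin 5) (Fin 5) ℝ)
    (hA : A = !![u, 0, -α₁ * u, α₁, 0;
                 0, u, -c₁ * u, c₁, c₁ * (1 - c₁) * ρ;
                 0, 0, 0, 1, 0;
                 -a₁ ^ 2 * c₁ / α₁ + a₂ ^ 2 * (1 - c₁) / (1 - α₁), a₁ ^ 2 - a₂ ^ 2,
                   -u ^ 2 + c₁ * a₁ ^ 2 + (1 - c₁) * a₂ ^ 2 * (ρ / ρ₂) * D, 2 * u, 0;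
                 -a₁ ^ 2 / (α₁ * ρ) - a₂ ^ 2 / ((1 - α₁) * ρ), a₁ ^ 2 / (α₁ * ρ₁) + a₂ ^ 2 / ((1 - α₁) * ρ₂),
                   a₁ ^ 2 / ρ - (a₂ ^ 2 / ρ₂) * D, 0, u]) :
    A.mulVec ![α₁, 1, 1, u + a₁, a₁ / (α₁ * ρ₁)] =
      (u + a₁) • ![α₁, 1, 1, u + a₁, a₁ / (α₁ * ρ₁)] := by
  subst hA hDdef
  have hα : α₁ ≠ 0 := hα₁.ne'
  have hα2 : (1 - α₁) ≠ 0 := by linarith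
  have hc : c₁ ≠ 0 := hc₁.ne'
  have hc2 : (1 - c₁) ≠ 0 := by linarith
  have hρ' : ρ ≠ 0 := hρ.ne'
  have hρ₁' : ρ₁ ≠ 0 := hρ₁.ne'
  have hρ₂' : ρ₂ ≠ 0 := hρ₂.ne'
  have k1 : ρ / ρ₂ = (1 - α₁) / (1 - c₁) := by
    rw [div_eq_div_iff hρ₂' hc2]; linarith [h2]
  have k2 : a₂ ^ 2 / ρ₂ = a₂ ^ 2 * (1 - α₁) / ((1 - c₁) * ρ) := by
    rw [div_eq_div_iff hρ₂' (mul_ne_zero hc2 hρ')]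
    have : ρ₂ * (1 - α₁) = (1 - c₁) * ρ := by linarith [h2]
    linear_combination -a₂ ^ 2 * this
  have k3 : a₁ ^ 2 / (α₁ * ρ₁) = a₁ ^ 2 / (c₁ * ρ) := by rw [h1]
  have k4 : a₂ ^ 2 / ((1 - α₁) * ρ₂) = a₂ ^ 2 / ((1 - c₁) * ρ) := by rw [h2]
  have k5 : a₁ / (α₁ * ρ₁) = a₁ / (c₁ * ρ) := by rw [h1]
  funext i
  fin_cases i <;>
    simp [Matrix.mulVec, dotProduct, Fin.sum_univ_five, k1, k2, k3, k4, k5] <;> (try field_simp) <;>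
    ring
end

section
/- With A as in the previous context, the vector R₂₋ = (α₁, 0, 1, u − a₂, a₂/(α₂ρ₂))ᵀ satisfies A·R₂₋ = (u − a₂)·R₂₋. -/
open Matrix

/-- `R₂₋ = (α₁, 0, 1, u − a₂, a₂/(α₂ρ₂))ᵀ` is an eigenvector of the equilibrium
Jacobian `A` with eigenvalue `u − a₂`. -/
theorem stmt_7 (u a₁ a₂ α₁ c₁ ρ ρ₁ ρ₂ : ℝ)
    (ha₁ : 0 < a₁) (ha₂ : 0 < a₂) (hα₁ : 0 < α₁) (hα₁1 : α₁ < 1)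
    (hc₁ : 0 < c₁) (hc₁1 : c₁ < 1) (hρ : 0 < ρ) (hρ₁ : 0 < ρ₁) (hρ₂ : 0 < ρ₂)
    (h1 : α₁ * ρ₁ = c₁ * ρ) (h2 : (1 - α₁) * ρ₂ = (1 - c₁) * ρ)
    (D : ℝ) (hDdef : D = ((1 - α₁) - α₁ * (1 - c₁)) / (1 - α₁) ^ 2)
    (A : Matrix (Fin 5) (Fin 5) ℝ)
    (hA : A = !![u, 0, -α₁ * u, α₁, 0;
                 0, u, -c₁ * u, c₁, c₁ * (1 - c₁) * ρ;
                 0, 0, 0, 1, 0;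
                 -a₁ ^ 2 * c₁ / α₁ + a₂ ^ 2 * (1 - c₁) / (1 - α₁), a₁ ^ 2 - a₂ ^ 2,
                   -u ^ 2 + c₁ * a₁ ^ 2 + (1 - c₁) * a₂ ^ 2 * (ρ / ρ₂) * D, 2 * u, 0;
                 -a₁ ^ 2 / (α₁ * ρ) - a₂ ^ 2 / ((1 - α₁) * ρ), a₁ ^ 2 / (α₁ * ρ₁) + a₂ ^ 2 / ((1 - α₁) * ρ₂),
                   a₁ ^ 2 / ρ - (a₂ ^ 2 / ρ₂) * D, 0, u]) :
    A.mulVec ![α₁, 0, 1, u - a₂, a₂ / ((1 - α₁) * ρ₂)] =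
      (u - a₂) • ![α₁, 0, 1, u - a₂, a₂ / ((1 - α₁) * ρ₂)] := by
  have hα₂ : (1:ℝ) - α₁ ≠ 0 := by linarith
  have hc₂ : (1:ℝ) - c₁ ≠ 0 := by linarith
  have hρ' : ρ ≠ 0 := hρ.ne'
  have hρ₁' : ρ₁ ≠ 0 := hρ₁.ne'
  have hρ₂' : ρ₂ ≠ 0 := hρ₂.ne'
  have hα₁' : α₁ ≠ 0 := hα₁.ne'
  have hρ₂eq : ρ₂ = (1 - c₁) * ρ / (1 - α₁) := by field_simp; linarith [h2]
  subst hA hDdef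
  funext i
  fin_cases i <;>
      simp [mulVec, dotProduct, Fin.sum_univ_five] <;>
      (try field_simp) <;>
    first
      | ring1
      | (rw [hρ₂eq]; field_simp; ring)
end

section
/- With A as in the previous context and ε = −(α₁c₂ − α₂c₁)/(α₂c₁), the vector R_C = (α₁ε + α₁/c₁, 1, ε, uε, 0)ᵀ satisfies A·R_C = u·R_C. -/
set_option maxHeartbeats 2000000


open Matrix

/-- The contact eigenvector `R_C` satisfies `A·R_C = u·R_C`. -/
theorem stmt_8 (u a₁ a₂ α₁ c₁ ρ ρ₁ ρ₂ : ℝ)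
    (ha₁ : 0 < a₁) (ha₂ : 0 < a₂) (hα₁ : 0 < α₁) (hα₁1 : α₁ < 1)
    (hc₁ : 0 < c₁) (hc₁1 : c₁ < 1) (hρ : 0 < ρ) (hρ₁ : 0 < ρ₁) (hρ₂ : 0 < ρ₂)
    (h1 : α₁ * ρ₁ = c₁ * ρ) (h2 : (1 - α₁) * ρ₂ = (1 - c₁) * ρ)
    (D : ℝ) (hDdef : D = ((1 - α₁) - α₁ * (1 - c₁)) / (1 - α₁) ^ 2)
    (A : Matrix (Fin 5) (Fin 5) ℝ)
    (hA : A = !![u, 0, -α₁ * u, α₁, 0;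
                 0, u, -c₁ * u, c₁, c₁ * (1 - c₁) * ρ;
                 0, 0, 0, 1, 0;
                 -a₁ ^ 2 * c₁ / α₁ + a₂ ^ 2 * (1 - c₁) / (1 - α₁), a₁ ^ 2 - a₂ ^ 2,
                   -u ^ 2 + c₁ * a₁ ^ 2 + (1 - c₁) * a₂ ^ 2 * (ρ / ρ₂) * D, 2 * u, 0;
                 -a₁ ^ 2 / (α₁ * ρ) - a₂ ^ 2 / ((1 - α₁) * ρ), a₁ ^ 2 / (α₁ * ρ₁) + a₂ ^ 2 / ((1 - α₁) * ρ₂),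
                   a₁ ^ 2 / ρ - (a₂ ^ 2 / ρ₂) * D, 0, u])
    (ε : ℝ) (hε : ε = -(α₁ * (1 - c₁) - (1 - α₁) * c₁) / ((1 - α₁) * c₁)) :
    A.mulVec ![α₁ * ε + α₁ / c₁, 1, ε, u * ε, 0] =
      u • ![α₁ * ε + α₁ / c₁, 1, ε, u * ε, 0] := by
  have hα₁' : α₁ ≠ 0 := ne_of_gt hα₁
  have hα₂ : (1 : ℝ) - α₁ ≠ 0 := by linarith
  have hc₁' : c₁ ≠ 0 := ne_of_gt hc₁
  have hc₂ : (1 : ℝ) - c₁ ≠ 0 := by linarith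
  have hρ' : ρ ≠ 0 := ne_of_gt hρ
  have hρ₁' : ρ₁ ≠ 0 := ne_of_gt hρ₁
  have hρ₂' : ρ₂ ≠ 0 := ne_of_gt hρ₂
  have e1 : ρ₁ = c₁ * ρ / α₁ := by field_simp; linarith [h1]
  have e2 : ρ₂ = (1 - c₁) * ρ / (1 - α₁) := by field_simp; linarith [h2]
  subst hA hDdef hε e1 e2
  funext i
  fin_cases i <;>
    simp [mulVec, dotProduct, Fin.sum_univ_five] <;>
    field_simp <;>
    ring
end

section
/- With g as in the previous context and R₁± = (α₁, 1, 1, u±a₁, ±a₁/(α₁ρ₁))ᵀ, assuming α₁ρ₁ = c₁ρ and α₂ρ₂ = c₂ρ, the inner product g · R₁± equals −a₁²/α₁, which is nonzero. -/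
open Matrix

/-- Shizuta–Kawashima condition for the fields `R₁±`: `g · R₁± = −a₁²/α₁ ≠ 0`. -/
theorem stmt_11 (u a₁ a₂ α₁ c₁ ρ ρ₁ ρ₂ : ℝ)
    (ha₁ : 0 < a₁) (ha₂ : 0 < a₂) (hα₁ : 0 < α₁) (hα₁1 : α₁ < 1)
    (hc₁ : 0 < c₁) (hc₁1 : c₁ < 1) (hρ : 0 < ρ) (hρ₁ : 0 < ρ₁) (hρ₂ : 0 < ρ₂)
    (h1 : α₁ * ρ₁ = c₁ * ρ) (h2 : (1 - α₁) * ρ₂ = (1 - c₁) * ρ)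
    (D : ℝ) (hDdef : D = ((1 - α₁) - α₁ * (1 - c₁)) / (1 - α₁) ^ 2)
    (g : Fin 5 → ℝ)
    (hg : g = ![a₁ ^ 2 * c₁ / α₁ ^ 2 + a₂ ^ 2 * (1 - c₁) / (1 - α₁) ^ 2,
                -(a₁ ^ 2 / α₁ + a₂ ^ 2 / (1 - α₁)),
                -a₁ ^ 2 * c₁ / α₁ + a₂ ^ 2 * ((1 - c₁) / (1 - α₁)) * (ρ / ρ₂) * D,
                0, 0]) :
    (∀ s : ℝ, s = 1 ∨ s = -1 →
      g ⬝ᵥ ![α₁, 1, 1, u + s * a₁, s * (a₁ / (α₁ * ρ₁))] = -(a₁ ^ 2 / α₁)) ∧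
    -(a₁ ^ 2 / α₁) ≠ 0 := by
  have hα2 : (1:ℝ) - α₁ ≠ 0 := by linarith
  have hα : α₁ ≠ 0 := ne_of_gt hα₁
  have hc2 : (1:ℝ) - c₁ ≠ 0 := by linarith
  constructor
  · intro s hs
    subst hg hDdef
    have hρ₂' : ρ₂ = (1 - c₁) * ρ / (1 - α₁) := by
      field_simp
      linarith [h2]
    subst hρ₂'
    simp [dotProduct, Fin.sum_univ_five]
    field_simp
    ring
  · have : a₁ ^ 2 / α₁ > 0 := by positivity
    intro h
    nlinarith
end

section
/- With g as above and R₂± = (α₁, 0, 1, u±a₂, ∓a₂/(α₂ρ₂))ᵀ, assuming α₁ρ₁ = c₁ρ and α₂ρ₂ = c₂ρ, the inner product g · R₂± equals a₂²/α₂, which is nonzero. Hence the Shizuta–Kawashima condition g · R ≠ 0 holds for all five equilibrium eigenvectors of the barotropic SHTC system. -/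
open Matrix

/-- Shizuta–Kawashima condition for the fields `R₂±`: `g · R₂± = a₂²/α₂ ≠ 0`. -/
theorem stmt_12 (u a₁ a₂ α₁ c₁ ρ ρ₁ ρ₂ : ℝ)
    (ha₁ : 0 < a₁) (ha₂ : 0 < a₂) (hα₁ : 0 < α₁) (hα₁1 : α₁ < 1)
    (hc₁ : 0 < c₁) (hc₁1 : c₁ < 1) (hρ : 0 < ρ) (hρ₁ : 0 < ρ₁) (hρ₂ : 0 < ρ₂)
    (h1 : α₁ * ρ₁ = c₁ * ρ) (h2 : (1 - α₁) * ρ₂ = (1 - c₁) * ρ)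
    (D : ℝ) (hDdef : D = ((1 - α₁) - α₁ * (1 - c₁)) / (1 - α₁) ^ 2)
    (g : Fin 5 → ℝ)
    (hg : g = ![a₁ ^ 2 * c₁ / α₁ ^ 2 + a₂ ^ 2 * (1 - c₁) / (1 - α₁) ^ 2,
                -(a₁ ^ 2 / α₁ + a₂ ^ 2 / (1 - α₁)),
                -a₁ ^ 2 * c₁ / α₁ + a₂ ^ 2 * ((1 - c₁) / (1 - α₁)) * (ρ / ρ₂) * D,
                0, 0]) :
    (∀ s : ℝ, s = 1 ∨ s = -1 →
      g ⬝ᵥ ![α₁, 0, 1, u + s * a₂, -(s * (a₂ / ((1 - α₁) * ρ₂)))] = a₂ ^ 2 / (1 - α₁)) ∧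
    a₂ ^ 2 / (1 - α₁) ≠ 0 := by
  have hα2 : (1 : ℝ) - α₁ > 0 := by linarith
  have hc2 : (1 : ℝ) - c₁ > 0 := by linarith
  constructor
  · intro s _hs
    subst hg hDdef
    have hρ₂' : ρ₂ = (1 - c₁) * ρ / (1 - α₁) := by
      field_simp
      linarith [h2]
    subst hρ₂'
    simp [dotProduct, Fin.sum_univ_five]
    field_simp
    ring
  · positivity
end
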